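/- Let x ∈ ℝ^m. Then there exists b ∈ ℝ such that the vector p ∈ ℝ^m with coordinates p_j = max(x_j + b, 0) lies in the standard probability simplex and is the Euclidean projection of x onto the simplex, i.e. ‖x − p‖ ≤ ‖x − z‖ for every z in the standard probability simplex. -/

import Mathlib

/-- The Euclidean projection of `x ∈ ℝ^m` onto the standard probability
simplex has the form `p_j = max (x_j + b, 0)` for some scalar shift `b`: there exists
`b ∈ ℝ` such that the vector `p = ReLU(x + b·𝟙)` lies in the simplex and satisfies
`‖x − p‖ ≤ ‖x − z‖` for every `z` in the simplex. -/
theorem simplex_projection_is_shifted_relu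
    {m : ℕ} (hm : 0 < m) (x : EuclideanSpace ℝ (Fin m)) :
    ∃ b : ℝ, ∃ p : EuclideanSpace ℝ (Fin m),
      (∀ j, p j = max (x j + b) 0) ∧
      (∀ j, 0 ≤ p j) ∧ (∑ j, p j = 1) ∧
      ∀ z : EuclideanSpace ℝ (Fin m),
        (∀ j, 0 ≤ z j) → (∑ j, z j = 1) → ‖x - p‖ ≤ ‖x - z‖ := by
  have hne : Nonempty (Fin m) := ⟨⟨0, hm⟩⟩
  set f : ℝ → ℝ := fun b => ∑ j, max (x j + b) 0 with hfdef
  have hcont : Continuous f :=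
    continuous_finset_sum _ fun j _ =>
      ((continuous_const.add continuous_id).max continuous_const)
  set M : ℝ := Finset.univ.sup' Finset.univ_nonempty x with hMdef
  have hM : ∀ j, x j ≤ M := fun j => Finset.le_sup' x (Finset.mem_univ j)
  set i0 : Fin m := ⟨0, hm⟩
  set b₁ : ℝ := max (-M) (1 - x i0) with hb1def
  have hb0 : f (-M) = 0 := Finset.sum_eq_zero fun j _ =>
    max_eq_right (by linarith [hM j])
  have hb1 : 1 ≤ f b₁ := by
    have h1 : (1:ℝ) ≤ max (x i0 + b₁) 0 := by
      have : 1 - x i0 ≤ b₁ := le_max_right _ _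
      exact le_max_of_le_left (by linarith)
    calc (1:ℝ) ≤ max (x i0 + b₁) 0 := h1
      _ ≤ ∑ j, max (x j + b₁) 0 :=
          Finset.single_le_sum (f := fun j => max (x j + b₁) 0) (fun j _ => le_max_right _ _) (Finset.mem_univ i0)
  obtain ⟨b, -, hfb⟩ := intermediate_value_Icc (le_max_left (-M) _) hcont.continuousOn
    (Set.mem_Icc.mpr ⟨by rw [hb0]; exact zero_le_one, hb1⟩)
  refine ⟨b, (WithLp.toLp 2 (fun j => max (x j + b) 0) : EuclideanSpace ℝ (Fin m)), fun j => rfl,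
    fun j => le_max_right _ _, hfb, ?_⟩
  intro z hz hzsum
  set p : EuclideanSpace ℝ (Fin m) := WithLp.toLp 2 (fun j => max (x j + b) 0) with hpdef
  have hxp : ∀ j, x j - p j ≤ -b := by
    intro j
    rcases le_or_gt (x j + b) 0 with h | h
    · have hp : p j = 0 := max_eq_right h
      rw [hp]; linarith
    · have hp : p j = x j + b := max_eq_left h.le
      rw [hp]; linarith
  have hxpp : ∀ j, (x j - p j) * p j = -b * p j := by
    intro j
    rcases le_or_gt (x j + b) 0 with h | h
    · have hp : p j = 0 := max_eq_right h
      rw [hp]; ring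
    · have hp : p j = x j + b := max_eq_left h.le
      rw [hp]; ring
  have key : 0 ≤ ∑ j, (x j - p j) * (p j - z j) := by
    have h1 : ∑ j, (x j - p j) * p j = -b := by
      rw [Finset.sum_congr rfl fun j _ => hxpp j, ← Finset.mul_sum]
      have hs : ∑ i, p i = 1 := hfb
      rw [hs, mul_one]
    have h2 : ∑ j, (x j - p j) * z j ≤ -b := by
      calc ∑ j, (x j - p j) * z j ≤ ∑ j, -b * z j :=
            Finset.sum_le_sum fun j _ => mul_le_mul_of_nonneg_right (hxp j) (hz j)
        _ = -b := by rw [← Finset.mul_sum, hzsum, mul_one]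
    have hsplit : ∑ j, (x j - p j) * (p j - z j)
        = (∑ j, (x j - p j) * p j) - ∑ j, (x j - p j) * z j := by
      rw [← Finset.sum_sub_distrib]
      exact Finset.sum_congr rfl fun j _ => by ring
    rw [hsplit, h1]; linarith
  rw [EuclideanSpace.norm_eq, EuclideanSpace.norm_eq]
  apply Real.sqrt_le_sqrt
  have happ : ∀ (w : EuclideanSpace ℝ (Fin m)) j, (x - w) j = x j - w j := fun w j => rfl
  simp only [happ, Real.norm_eq_abs, sq_abs]
  have expand : ∀ j : Fin m,
      (x j - z j)^2 = (x j - p j)^2 + 2*((x j - p j)*(p j - z j)) + (p j - z j)^2 :=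
    fun j => by ring
  calc ∑ j, (x j - p j)^2
      ≤ ∑ j, ((x j - p j)^2 + 2*((x j - p j)*(p j - z j)) + (p j - z j)^2) := by
        rw [Finset.sum_add_distrib, Finset.sum_add_distrib, ← Finset.mul_sum]
        have hsq := Finset.sum_nonneg (fun j (_ : j ∈ Finset.univ) => sq_nonneg (p j - z j))
        linarith
    _ = ∑ j, (x j - z j)^2 := Finset.sum_congr rfl fun j _ => (expand j).symm
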